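/- Suppose l_1 + c < k. The map 𝔟 : (I,J) ↦ (Ĩ, J̃) is a bijection between: (a) the set of l_1-admissible pairs (I,J) with |I| = a and |J| = a+c, and (b) the set of pairs (Ĩ, J̃) where Ĩ = {u_1 < ⋯ < u_ã} with ã = a + k − l_1 − c and u_{a+1} ≥ l_1 + 1, and J̃ = {v_1 < ⋯ < v_b̃} with b̃ = a + u_{a+1} − l_1 − 1, v_b̃ < u_{a+1}, and v_i ≤ u_i for 1 ≤ i ≤ a. The inverse map is 𝔠(Ĩ, J̃) = (I, J) with I = {u_1,…,u_a} and J = J̃ ⊔ ([u_{a+1}, k] \ Ĩ). -/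

import Mathlib

/-- The `i`-th (0-based) smallest element of a finset of naturals, default `d`. -/
def sortedNth (S : Finset ℕ) (i d : ℕ) : ℕ := (S.sort (· ≤ ·)).getD i d

/-- `p = #{j ∈ J : j ≤ l₁}`. -/
def pOf (l1 : ℕ) (J : Finset ℕ) : ℕ := (J.filter (fun x => x ≤ l1)).card

/-- `v'_i` (paper index `i ≥ 1`): the `(p−i)`-th (0-based) smallest element of the
complement `[l₁+1,k] \ J`, defaulting to `k+1`. -/
def vp (k l1 : ℕ) (J : Finset ℕ) (i : ℕ) : ℕ :=
  sortedNth (Finset.Icc (l1 + 1) k \ J) (pOf l1 J - i) (k + 1)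

/-- `(I,J)` is an `l₁`-admissible pair with `|I| = a`, `|J| = a + c`. -/
def AdmPair (k l1 a c : ℕ) (I J : Finset ℕ) : Prop :=
  I ⊆ Finset.Icc 1 k ∧ J ⊆ Finset.Icc 1 k ∧ I.card = a ∧ J.card = a + c ∧
  a ≤ pOf l1 J ∧
  ∀ i < a, sortedNth J i 0 ≤ sortedNth I i 0 ∧ sortedNth I i 0 < vp k l1 J (i + 1)

/-- `Ĩ = I ⊔ I'`: `I` together with the complement `[l₁+1,k] \ J` minus its
`p − a` smallest elements. -/
def ItildeOf (k l1 a : ℕ) (I J : Finset ℕ) : Finset ℕ :=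
  I ∪ (((Finset.Icc (l1 + 1) k \ J).sort (· ≤ ·)).drop (pOf l1 J - a)).toFinset

/-- `J̃ = J ∩ [1, v'_a − 1]`. -/
def JtildeOf (k l1 a : ℕ) (J : Finset ℕ) : Finset ℕ :=
  J ∩ Finset.Icc 1 (vp k l1 J a - 1)

/-- The conditions (2.17)–(2.18) on the pair `(Ĩ, J̃)`: writing
`Ĩ = {u_1 < ⋯ < u_ã}` with `ã = a + k − l₁ − c`, one requires `u_{a+1} ≥ l₁ + 1`,
`|J̃| = a + u_{a+1} − l₁ − 1`, all elements of `J̃` are `< u_{a+1}`, and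
`v_i ≤ u_i` for `1 ≤ i ≤ a`. -/
def CondB (k l1 a c : ℕ) (It Jt : Finset ℕ) : Prop :=
  It ⊆ Finset.Icc 1 k ∧ Jt ⊆ Finset.Icc 1 k ∧
  It.card = a + k - l1 - c ∧
  l1 + 1 ≤ sortedNth It a 0 ∧
  Jt.card = a + sortedNth It a 0 - l1 - 1 ∧
  (∀ x ∈ Jt, x < sortedNth It a 0) ∧
  ∀ i < a, sortedNth Jt i 0 ≤ sortedNth It i 0

/-- The inverse map `𝔠(Ĩ, J̃) = (I, J)`: `I` is the set of the `a` smallest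
elements of `Ĩ` and `J = J̃ ⊔ ([u_{a+1}, k] \ Ĩ)`. -/
def ccMap (k a : ℕ) (It Jt : Finset ℕ) : Finset ℕ × Finset ℕ :=
  (((It.sort (· ≤ ·)).take a).toFinset,
    Jt ∪ (Finset.Icc (sortedNth It a 0) k \ It))

namespace Stmt11Aux

lemma sort_len (S : Finset ℕ) : (S.sort (· ≤ ·)).length = S.card := Finset.length_sort _

lemma sort_strict (S : Finset ℕ) : ∀ (i j : ℕ) (_hi : i < (S.sort (· ≤ ·)).length)
    (_hj : j < (S.sort (· ≤ ·)).length), i < j → (S.sort (· ≤ ·))[i] < (S.sort (· ≤ ·))[j] :=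
  List.pairwise_iff_getElem.mp (S.sortedLT_sort.pairwise)

lemma sortedNth_eq_getElem {S : Finset ℕ} (d : ℕ) {i : ℕ} (h : i < S.card) :
    sortedNth S i d = (S.sort (· ≤ ·))[i]'(by rw [sort_len]; exact h) :=
  List.getD_eq_getElem _ _ _

lemma sortedNth_mem {S : Finset ℕ} (d : ℕ) {i : ℕ} (h : i < S.card) : sortedNth S i d ∈ S := by
  rw [sortedNth_eq_getElem d h, ← Finset.mem_sort (α := ℕ) (· ≤ ·)]
  exact List.getElem_mem _

lemma sortedNth_lt_sortedNth {S : Finset ℕ} (d e : ℕ) {i j : ℕ} (hij : i < j) (hj : j < S.card) :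
    sortedNth S i d < sortedNth S j e := by
  rw [sortedNth_eq_getElem d (hij.trans hj), sortedNth_eq_getElem e hj]
  exact sort_strict S i j _ _ hij

lemma sortedNth_mono {S : Finset ℕ} (d : ℕ) {i j : ℕ} (hij : i ≤ j) (hj : j < S.card) :
    sortedNth S i d ≤ sortedNth S j d := by
  rcases eq_or_lt_of_le hij with rfl | h
  · exact le_refl _
  · exact (sortedNth_lt_sortedNth d d h hj).le

lemma sortedNth_default {S : Finset ℕ} (d : ℕ) {i : ℕ} (h : S.card ≤ i) :
    sortedNth S i d = d := by
  unfold sortedNth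
  rw [List.getD_eq_default]
  rw [sort_len]; exact h

lemma exists_sortedNth {S : Finset ℕ} (d : ℕ) {x : ℕ} (hx : x ∈ S) :
    ∃ i, i < S.card ∧ sortedNth S i d = x := by
  rw [← Finset.mem_sort (α := ℕ) (· ≤ ·)] at hx
  obtain ⟨i, hi, hix⟩ := List.mem_iff_getElem.mp hx
  refine ⟨i, by rwa [sort_len] at hi, ?_⟩
  rw [sortedNth_eq_getElem d (by rwa [sort_len] at hi)]
  exact hix

lemma sortedNth_zero {S : Finset ℕ} (d : ℕ) {u : ℕ} (hu : u ∈ S) (hmin : ∀ x ∈ S, u ≤ x) :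
    sortedNth S 0 d = u := by
  have hcard : 0 < S.card := Finset.card_pos.mpr ⟨u, hu⟩
  have h1 : sortedNth S 0 d ∈ S := sortedNth_mem d hcard
  obtain ⟨i, hi, hix⟩ := exists_sortedNth d hu
  have := sortedNth_mono d (Nat.zero_le i) hi
  rw [hix] at this
  exact le_antisymm this (hmin _ h1)

lemma sort_union {A B : Finset ℕ} (h : ∀ x ∈ A, ∀ y ∈ B, x < y) :
    (A ∪ B).sort (· ≤ ·) = A.sort (· ≤ ·) ++ B.sort (· ≤ ·) := by
  have dis : Disjoint A B := by
    rw [Finset.disjoint_left]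
    intro x hx hxB
    exact lt_irrefl x (h x hx x hxB)
  apply fun hp h1 h2 => List.Perm.eq_of_pairwise' (r := (· ≤ · : ℕ → ℕ → Prop)) h1 h2 hp
  · rw [← Multiset.coe_eq_coe, ← Multiset.coe_add]
    rw [Finset.sort_eq, Finset.sort_eq, Finset.sort_eq]
    rw [← Finset.disjUnion_eq_union A B dis]
    rfl
  · exact Finset.pairwise_sort _ _
  · rw [List.pairwise_append]
    refine ⟨Finset.pairwise_sort _ _, Finset.pairwise_sort _ _, ?_⟩
    intro x hx y hy
    exact (h x (Finset.mem_sort (α := ℕ) (· ≤ ·) |>.mp hx) y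
      (Finset.mem_sort (α := ℕ) (· ≤ ·) |>.mp hy)).le

lemma sortedNth_union_left {A B : Finset ℕ} (h : ∀ x ∈ A, ∀ y ∈ B, x < y) (d : ℕ) {i : ℕ}
    (hi : i < A.card) : sortedNth (A ∪ B) i d = sortedNth A i d := by
  unfold sortedNth
  rw [sort_union h, List.getD_append]
  rw [sort_len]; exact hi

lemma sortedNth_union_right {A B : Finset ℕ} (h : ∀ x ∈ A, ∀ y ∈ B, x < y) (d : ℕ) {i : ℕ}
    (hi : A.card ≤ i) : sortedNth (A ∪ B) i d = sortedNth B (i - A.card) d := by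
  unfold sortedNth
  rw [sort_union h, List.getD_append_right, sort_len]
  rw [sort_len]; exact hi

lemma take_toFinset {S : Finset ℕ} {n : ℕ} (hn : n < S.card) (d : ℕ) :
    ((S.sort (· ≤ ·)).take n).toFinset = S.filter (fun x => x < sortedNth S n d) := by
  have hlen := sort_len S
  ext x
  simp only [List.mem_toFinset, Finset.mem_filter]
  rw [sortedNth_eq_getElem d hn]
  constructor
  · intro hx
    obtain ⟨i, hi, hix⟩ := List.mem_iff_getElem.mp hx
    rw [List.getElem_take] at hix
    have hilen : i < n := by
      rw [List.length_take, lt_min_iff] at hi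
      exact hi.1
    constructor
    · rw [← hix, ← Finset.mem_sort (α := ℕ) (· ≤ ·)]; exact List.getElem_mem _
    · rw [← hix]; exact sort_strict S i n _ (by omega) hilen
  · rintro ⟨hxS, hxlt⟩
    rw [← Finset.mem_sort (α := ℕ) (· ≤ ·)] at hxS
    obtain ⟨i, hi, hix⟩ := List.mem_iff_getElem.mp hxS
    have hin : i < n := by
      by_contra hc
      push_neg at hc
      rcases eq_or_lt_of_le hc with rfl | hlt
      · rw [hix] at hxlt; exact lt_irrefl x hxlt
      · have := sort_strict S n i (by omega) hi hlt
        rw [hix] at this; omega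
    rw [List.mem_iff_getElem]
    exact ⟨i, by rw [List.length_take]; omega, by rw [List.getElem_take]; exact hix⟩

lemma drop_toFinset {S : Finset ℕ} {n : ℕ} (hn : n < S.card) (d : ℕ) :
    ((S.sort (· ≤ ·)).drop n).toFinset = S.filter (fun x => sortedNth S n d ≤ x) := by
  have hlen := sort_len S
  ext x
  simp only [List.mem_toFinset, Finset.mem_filter]
  rw [sortedNth_eq_getElem d hn]
  constructor
  · intro hx
    obtain ⟨i, hi, hix⟩ := List.mem_iff_getElem.mp hx
    rw [List.getElem_drop] at hix
    constructor
    · rw [← hix, ← Finset.mem_sort (α := ℕ) (· ≤ ·)]; exact List.getElem_mem _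
    · rw [← hix]
      rcases Nat.eq_zero_or_pos i with rfl | hpos
      · simp
      · exact (sort_strict S n (n + i) (by omega) (by rw [List.length_drop] at hi; omega)
          (by omega)).le
  · rintro ⟨hxS, hxge⟩
    rw [← Finset.mem_sort (α := ℕ) (· ≤ ·)] at hxS
    obtain ⟨i, hi, hix⟩ := List.mem_iff_getElem.mp hxS
    have hin : n ≤ i := by
      by_contra hc
      push_neg at hc
      have := sort_strict S i n hi (by omega) hc
      rw [hix] at this; omega
    rw [List.mem_iff_getElem]
    refine ⟨i - n, by rw [List.length_drop]; omega, ?_⟩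
    rw [List.getElem_drop]
    have : n + (i - n) = i := by omega
    simp_rw [this]
    exact hix

lemma take_nodup (S : Finset ℕ) (n : ℕ) : ((S.sort (· ≤ ·)).take n).Nodup :=
  (List.take_sublist n _).nodup (Finset.sort_nodup _ _)

lemma drop_nodup (S : Finset ℕ) (n : ℕ) : ((S.sort (· ≤ ·)).drop n).Nodup :=
  (List.drop_sublist n _).nodup (Finset.sort_nodup _ _)

lemma take_card (S : Finset ℕ) {n : ℕ} (hn : n ≤ S.card) :
    ((S.sort (· ≤ ·)).take n).toFinset.card = n := by
  rw [List.toFinset_card_of_nodup (take_nodup S n), List.length_take, sort_len]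
  omega

lemma drop_card (S : Finset ℕ) (n : ℕ) :
    ((S.sort (· ≤ ·)).drop n).toFinset.card = S.card - n := by
  rw [List.toFinset_card_of_nodup (drop_nodup S n), List.length_drop, sort_len]

lemma sort_take (S : Finset ℕ) (n : ℕ) :
    (((S.sort (· ≤ ·)).take n).toFinset).sort (· ≤ ·) = (S.sort (· ≤ ·)).take n :=
  (List.toFinset_sort _ (take_nodup S n)).mpr
    (List.Pairwise.sublist (List.take_sublist n _) (Finset.pairwise_sort _ _))

lemma sort_drop (S : Finset ℕ) (n : ℕ) :
    (((S.sort (· ≤ ·)).drop n).toFinset).sort (· ≤ ·) = (S.sort (· ≤ ·)).drop n :=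
  (List.toFinset_sort _ (drop_nodup S n)).mpr
    (List.Pairwise.sublist (List.drop_sublist n _) (Finset.pairwise_sort _ _))


lemma forward (k l1 a c : ℕ) (hl1 : l1 ≤ k) (hlck : l1 + c < k) (hal1 : a ≤ l1)
    (I J : Finset ℕ) (h : AdmPair k l1 a c I J) :
    CondB k l1 a c (ItildeOf k l1 a I J) (JtildeOf k l1 a J) ∧
    ccMap k a (ItildeOf k l1 a I J) (JtildeOf k l1 a J) = (I, J) := by
  obtain ⟨hIk, hJk, hIc, hJc, hap, hadm⟩ := h
  set p := pOf l1 J with hp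
  set C := Finset.Icc (l1 + 1) k \ J with hCdef
  have hJfilters : (J.filter fun x => x ≤ l1).card + (J.filter fun x => ¬ x ≤ l1).card = J.card :=
    Finset.card_filter_add_card_filter_not _
  set t1 := (J.filter fun x => ¬ x ≤ l1).card with ht1
  have hinter : Finset.Icc (l1 + 1) k ∩ J = J.filter fun x => ¬ x ≤ l1 := by
    ext x
    simp only [Finset.mem_inter, Finset.mem_filter, Finset.mem_Icc, not_le]
    constructor
    · rintro ⟨⟨h1, _⟩, hxJ⟩; exact ⟨hxJ, by omega⟩
    · rintro ⟨hxJ, hx⟩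
      have hb := hJk hxJ
      rw [Finset.mem_Icc] at hb
      exact ⟨⟨by omega, hb.2⟩, hxJ⟩
  have hCcard : C.card + t1 = k - l1 := by
    have h1 : C = Finset.Icc (l1 + 1) k \ (Finset.Icc (l1 + 1) k ∩ J) := by
      rw [hCdef, Finset.sdiff_inter_self_left]
    have h3 := Finset.card_sdiff_of_subset (s := Finset.Icc (l1 + 1) k ∩ J) (t := Finset.Icc (l1 + 1) k) Finset.inter_subset_left
    rw [← h1, hinter] at h3
    have h4 : (Finset.Icc (l1 + 1) k).card = k - l1 := by rw [Nat.card_Icc]; omega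
    have h5 : (J.filter fun x => ¬ x ≤ l1).card ≤ (Finset.Icc (l1 + 1) k).card := by
      rw [← hinter]; exact Finset.card_le_card Finset.inter_subset_left
    omega
  have hpt1 : p + t1 = a + c := by rw [hp, ht1]; rw [hJc] at hJfilters; exact hJfilters
  have hd : p - a < C.card := by omega
  have hvp_eq : vp k l1 J a = sortedNth C (p - a) (k + 1) := rfl
  set vpa := sortedNth C (p - a) (k + 1) with hvpadef
  have hvpaC : vpa ∈ C := sortedNth_mem _ hd
  have hvpab : (l1 + 1 ≤ vpa ∧ vpa ≤ k) ∧ vpa ∉ J := by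
    rw [hCdef] at hvpaC
    simpa [Finset.mem_sdiff, Finset.mem_Icc] using hvpaC
  obtain ⟨⟨hvpa1, hvpa2⟩, hvpaJ⟩ := hvpab
  -- split C
  have hC2 : ((C.sort (· ≤ ·)).drop (p - a)).toFinset = C.filter (fun x => vpa ≤ x) :=
    drop_toFinset hd (k + 1)
  set C2 := C.filter (fun x => vpa ≤ x) with hC2def
  have hC1 : ((C.sort (· ≤ ·)).take (p - a)).toFinset = C.filter (fun x => x < vpa) :=
    take_toFinset hd (k + 1)
  have hC1card : (C.filter (fun x => x < vpa)).card = p - a := by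
    rw [← hC1, take_card _ hd.le]
  have hC2card : C2.card = C.card - (p - a) := by rw [← hC2, drop_card]
  have hIlt : ∀ x ∈ I, x < vpa := by
    intro x hx
    obtain ⟨i, hi, hix⟩ := exists_sortedNth 0 hx
    rw [hIc] at hi
    have h1 : sortedNth I i 0 ≤ sortedNth I (a - 1) 0 :=
      sortedNth_mono 0 (by omega) (by rw [hIc]; omega)
    have h2 := (hadm (a - 1) (by omega)).2
    have h3 : (a - 1) + 1 = a := by omega
    rw [h3, hvp_eq] at h2
    omega
  have hIt : ItildeOf k l1 a I J = I ∪ C2 := by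
    show I ∪ ((C.sort (· ≤ ·)).drop (p - a)).toFinset = I ∪ C2
    rw [hC2, hC2def]
  have hIC2 : ∀ x ∈ I, ∀ y ∈ C2, x < y := fun x hx y hy =>
    lt_of_lt_of_le (hIlt x hx) (Finset.mem_filter.mp hy).2
  have hdisj : Disjoint I C2 := by
    rw [Finset.disjoint_left]
    intro x hx hxC2
    exact lt_irrefl x (hIC2 x hx x hxC2)
  have hItcard : (I ∪ C2).card = a + C2.card := by
    rw [Finset.card_union_of_disjoint hdisj, hIc]
  have hu_lt : ∀ i < a, sortedNth (I ∪ C2) i 0 = sortedNth I i 0 := fun i hi =>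
    sortedNth_union_left hIC2 0 (by rw [hIc]; exact hi)
  have hvpaC2 : vpa ∈ C2 := Finset.mem_filter.mpr ⟨hvpaC, le_refl _⟩
  have hu : sortedNth (I ∪ C2) a 0 = vpa := by
    rw [sortedNth_union_right hIC2 0 (by rw [hIc])]
    rw [hIc, Nat.sub_self]
    exact sortedNth_zero 0 hvpaC2 (fun x hx => (Finset.mem_filter.mp hx).2)
  have hJt : JtildeOf k l1 a J = J.filter (fun x => x < vpa) := by
    unfold JtildeOf
    rw [hvp_eq]
    ext x
    simp only [Finset.mem_inter, Finset.mem_Icc, Finset.mem_filter]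
    constructor
    · rintro ⟨hxJ, _, h2⟩; exact ⟨hxJ, by omega⟩
    · rintro ⟨hxJ, hlt⟩
      have hb := hJk hxJ
      rw [Finset.mem_Icc] at hb
      exact ⟨hxJ, hb.1, by omega⟩
  set t2 := (J.filter fun x => l1 < x ∧ x < vpa).card with ht2
  have hsplitJt : (J.filter (fun x => x < vpa)).card = p + t2 := by
    have h1 := Finset.card_filter_add_card_filter_not
      (s := J.filter (fun x => x < vpa)) (p := fun x => x ≤ l1)
    have e1 : (J.filter (fun x => x < vpa)).filter (fun x => x ≤ l1)
        = J.filter (fun x => x ≤ l1) := by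
      ext x
      simp only [Finset.mem_filter]
      constructor
      · tauto
      · rintro ⟨h1, h2⟩; exact ⟨⟨h1, by omega⟩, h2⟩
    have e2 : (J.filter (fun x => x < vpa)).filter (fun x => ¬ x ≤ l1)
        = J.filter (fun x => l1 < x ∧ x < vpa) := by
      ext x
      simp only [Finset.mem_filter, not_le]
      tauto
    rw [e1, e2] at h1
    rw [ht2, ← h1, hp]
    omega
  have hIccsplit : (vpa - 1) + 1 - (l1 + 1) = (p - a) + t2 := by
    have hsets : Finset.Icc (l1 + 1) (vpa - 1)
        = (C.filter (fun x => x < vpa)) ∪ (J.filter fun x => l1 < x ∧ x < vpa) := by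
      ext x
      simp only [Finset.mem_union, Finset.mem_filter, hCdef, Finset.mem_sdiff, Finset.mem_Icc]
      constructor
      · rintro ⟨h1, h2⟩
        by_cases hxJ : x ∈ J
        · right; exact ⟨hxJ, by omega, by omega⟩
        · left; exact ⟨⟨⟨h1, by omega⟩, hxJ⟩, by omega⟩
      · rintro (⟨⟨⟨h1, h2⟩, _⟩, h3⟩ | ⟨hxJ, h1, h2⟩)
        · omega
        · omega
    have hdisj2 : Disjoint (C.filter (fun x => x < vpa)) (J.filter fun x => l1 < x ∧ x < vpa) := by
      rw [Finset.disjoint_left]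
      intro x hx hxJ
      have := (Finset.mem_sdiff.mp (Finset.mem_filter.mp hx).1).2
      exact this (Finset.mem_filter.mp hxJ).1
    have := Finset.card_union_of_disjoint hdisj2
    rw [← hsets, Nat.card_Icc, hC1card] at this
    omega
  have hJtcard : (JtildeOf k l1 a J).card = p + t2 := by rw [hJt, hsplitJt]
  have hJsplit : J = (J.filter (fun x => x < vpa)) ∪ (J.filter (fun x => ¬ x < vpa)) :=
    (Finset.filter_union_filter_not_eq _ J).symm
  have hJlo : ∀ x ∈ J.filter (fun x => x < vpa), ∀ y ∈ J.filter (fun x => ¬ x < vpa), x < y := by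
    intro x hx y hy
    have h1 := (Finset.mem_filter.mp hx).2
    have h2 := (Finset.mem_filter.mp hy).2
    omega
  have hJnth : ∀ i < a, sortedNth J i 0 = sortedNth (J.filter (fun x => x < vpa)) i 0 := by
    intro i hi
    conv_lhs => rw [hJsplit]
    exact sortedNth_union_left hJlo 0 (by rw [hsplitJt]; omega)
  refine ⟨⟨?_, ?_, ?_, ?_, ?_, ?_, ?_⟩, ?_⟩
  · rw [hIt]
    apply Finset.union_subset hIk
    intro x hx
    have h1 := (Finset.mem_filter.mp hx).1
    rw [hCdef, Finset.mem_sdiff, Finset.mem_Icc] at h1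
    rw [Finset.mem_Icc]
    omega
  · rw [hJt]
    exact (Finset.filter_subset _ _).trans hJk
  · rw [hIt, hItcard]
    omega
  · rw [hIt, hu]
    exact hvpa1
  · rw [hIt, hu, hJtcard]
    omega
  · rw [hIt, hu, hJt]
    intro x hx
    exact (Finset.mem_filter.mp hx).2
  · intro i hi
    rw [hIt, hJt, hu_lt i hi, ← hJnth i hi]
    exact (hadm i hi).1
  · unfold ccMap
    rw [Prod.mk.injEq]
    constructor
    · rw [hIt, sort_union hIC2, List.take_left' (by rw [sort_len, hIc]), Finset.sort_toFinset]
    · rw [hIt, hu, hJt]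
      have hkey : Finset.Icc vpa k \ (I ∪ C2) = J.filter (fun x => ¬ x < vpa) := by
        ext x
        simp only [Finset.mem_sdiff, Finset.mem_Icc, Finset.mem_union, Finset.mem_filter, not_or,
          not_lt]
        constructor
        · rintro ⟨⟨h1, h2⟩, hxI, hxC2⟩
          refine ⟨?_, h1⟩
          by_contra hxJ
          apply hxC2
          rw [hC2def, Finset.mem_filter, hCdef, Finset.mem_sdiff, Finset.mem_Icc]
          exact ⟨⟨⟨by omega, h2⟩, hxJ⟩, h1⟩
        · rintro ⟨hxJ, h1⟩
          have hb := hJk hxJ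
          rw [Finset.mem_Icc] at hb
          refine ⟨⟨h1, hb.2⟩, fun hxI => ?_, fun hxC2 => ?_⟩
          · exact absurd (hIlt x hxI) (by omega)
          · have := (Finset.mem_sdiff.mp (Finset.mem_filter.mp hxC2).1).2
            exact this hxJ
      rw [hkey, Finset.filter_union_filter_not_eq]


lemma backward (k l1 a c : ℕ) (hl1 : l1 ≤ k) (hlck : l1 + c < k) (hal1 : a ≤ l1)
    (It Jt : Finset ℕ) (h : CondB k l1 a c It Jt) :
    AdmPair k l1 a c (ccMap k a It Jt).1 (ccMap k a It Jt).2 ∧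
    ItildeOf k l1 a (ccMap k a It Jt).1 (ccMap k a It Jt).2 = It ∧
    JtildeOf k l1 a (ccMap k a It Jt).2 = Jt := by
  obtain ⟨hItk, hJtk, hItc, hu1, hJtc, hJtlt, hcond⟩ := h
  set u := sortedNth It a 0 with hu
  have haIt : a < It.card := by omega
  have huIt : u ∈ It := sortedNth_mem 0 haIt
  have hub : 1 ≤ u ∧ u ≤ k := by
    have := hItk huIt; rw [Finset.mem_Icc] at this; exact this
  have hIt1 : ((It.sort (· ≤ ·)).take a).toFinset = It.filter (fun x => x < u) :=
    take_toFinset haIt 0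
  have hIt2 : ((It.sort (· ≤ ·)).drop a).toFinset = It.filter (fun x => u ≤ x) :=
    drop_toFinset haIt 0
  set It1 := It.filter (fun x => x < u) with hIt1def
  set It2 := It.filter (fun x => u ≤ x) with hIt2def
  have hIt1card : It1.card = a := by rw [← hIt1, take_card _ haIt.le]
  have hIt2card : It2.card = It.card - a := by rw [← hIt2, drop_card]
  have hI : (ccMap k a It Jt).1 = It1 := by
    show ((It.sort (· ≤ ·)).take a).toFinset = It1
    rw [hIt1]
  set D := Finset.Icc u k \ It with hD
  have hJ : (ccMap k a It Jt).2 = Jt ∪ D := rfl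
  have hDIt2 : D = Finset.Icc u k \ It2 := by
    ext x
    simp only [hD, hIt2def, Finset.mem_sdiff, Finset.mem_Icc, Finset.mem_filter]
    constructor
    · rintro ⟨⟨h1, h2⟩, hx⟩; exact ⟨⟨h1, h2⟩, fun hh => hx hh.1⟩
    · rintro ⟨⟨h1, h2⟩, hx⟩; exact ⟨⟨h1, h2⟩, fun hh => hx ⟨hh, h1⟩⟩
  have hIt2sub : It2 ⊆ Finset.Icc u k := by
    intro x hx
    rw [hIt2def, Finset.mem_filter] at hx
    have := hItk hx.1
    rw [Finset.mem_Icc] at this ⊢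
    omega
  have hDcard : D.card = (Finset.Icc u k).card - It2.card := by
    rw [hDIt2]; exact Finset.card_sdiff_of_subset hIt2sub
  have hIt2le : It2.card ≤ (Finset.Icc u k).card := Finset.card_le_card hIt2sub
  have hIcck : (Finset.Icc u k).card = k + 1 - u := Nat.card_Icc u k
  have hDlt : ∀ y ∈ D, u ≤ y := fun y hy => (Finset.mem_Icc.mp (Finset.mem_sdiff.mp hy).1).1
  have hJtD : ∀ x ∈ Jt, ∀ y ∈ D, x < y := fun x hx y hy =>
    lt_of_lt_of_le (hJtlt x hx) (hDlt y hy)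
  have hdisjJD : Disjoint Jt D := by
    rw [Finset.disjoint_left]
    intro x hx hxD
    exact lt_irrefl x (hJtD x hx x hxD)
  have hJcard : (Jt ∪ D).card = Jt.card + D.card := Finset.card_union_of_disjoint hdisjJD
  have hpJ : (Jt ∪ D).filter (fun x => x ≤ l1) = Jt.filter (fun x => x ≤ l1) := by
    ext x
    simp only [Finset.mem_filter, Finset.mem_union]
    constructor
    · rintro ⟨hx | hx, h2⟩
      · exact ⟨hx, h2⟩
      · exact absurd (hDlt x hx) (by omega)
    · rintro ⟨hx, h2⟩; exact ⟨Or.inl hx, h2⟩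
  set t := (Jt.filter fun x => ¬ x ≤ l1).card with ht
  have hJtsplit : (Jt.filter fun x => x ≤ l1).card + t = Jt.card :=
    Finset.card_filter_add_card_filter_not _
  have htsub : Jt.filter (fun x => ¬ x ≤ l1) ⊆ Finset.Icc (l1 + 1) (u - 1) := by
    intro x hx
    rw [Finset.mem_filter, not_le] at hx
    have := hJtlt x hx.1
    rw [Finset.mem_Icc]; omega
  have htle : t ≤ (u - 1) + 1 - (l1 + 1) := by
    rw [ht, ← Nat.card_Icc]; exact Finset.card_le_card htsub
  have hp' : pOf l1 (Jt ∪ D) = (Jt.filter fun x => x ≤ l1).card := by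
    unfold pOf; rw [hpJ]
  set B1 := Finset.Icc (l1 + 1) (u - 1) \ Jt with hB1
  have hC' : Finset.Icc (l1 + 1) k \ (Jt ∪ D) = B1 ∪ It2 := by
    ext x
    simp only [hB1, hD, hIt2def, Finset.mem_union, Finset.mem_sdiff, Finset.mem_Icc,
      Finset.mem_filter, not_or, not_and, not_not]
    constructor
    · rintro ⟨⟨h1, h2⟩, hxJt, hxD⟩
      by_cases hxu : u ≤ x
      · right
        exact ⟨hxD ⟨hxu, h2⟩, hxu⟩
      · left; exact ⟨⟨h1, by omega⟩, hxJt⟩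
    · rintro (⟨⟨h1, h2⟩, hxJt⟩ | ⟨hxIt, hxu⟩)
      · refine ⟨⟨h1, by omega⟩, hxJt, ?_⟩
        rintro ⟨hu2, _⟩; omega
      · have hb := hItk hxIt
        rw [Finset.mem_Icc] at hb
        refine ⟨⟨by omega, hb.2⟩, fun hxJt => ?_, fun _ => hxIt⟩
        exact absurd (hJtlt x hxJt) (by omega)
  have hB1It2 : ∀ x ∈ B1, ∀ y ∈ It2, x < y := by
    intro x hx y hy
    have h1 := Finset.mem_Icc.mp (Finset.mem_sdiff.mp hx).1
    have h2 := (Finset.mem_filter.mp hy).2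
    omega
  have hB1Jt : Finset.Icc (l1 + 1) (u - 1) ∩ Jt = Jt.filter (fun x => ¬ x ≤ l1) := by
    ext x
    simp only [Finset.mem_inter, Finset.mem_filter, Finset.mem_Icc, not_le]
    constructor
    · rintro ⟨⟨h1, h2⟩, hx⟩; exact ⟨hx, by omega⟩
    · rintro ⟨hx, hlx⟩
      have := hJtlt x hx
      exact ⟨⟨by omega, by omega⟩, hx⟩
  have hB1card : B1.card + t = (u - 1) + 1 - (l1 + 1) := by
    have h1 : B1 = Finset.Icc (l1 + 1) (u - 1) \ (Finset.Icc (l1 + 1) (u - 1) ∩ Jt) := by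
      rw [hB1, Finset.sdiff_inter_self_left]
    have h3 := Finset.card_sdiff_of_subset (s := Finset.Icc (l1 + 1) (u - 1) ∩ Jt)
      (t := Finset.Icc (l1 + 1) (u - 1)) Finset.inter_subset_left
    rw [← h1, hB1Jt] at h3
    rw [← Nat.card_Icc (l1 + 1) (u - 1)]
    have h5 : (Jt.filter fun x => ¬ x ≤ l1).card ≤ (Finset.Icc (l1 + 1) (u - 1)).card := by
      rw [← hB1Jt]; exact Finset.card_le_card Finset.inter_subset_left
    omega
  have hp'a : pOf l1 (Jt ∪ D) - a = B1.card := by omega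
  have huIt2 : u ∈ It2 := Finset.mem_filter.mpr ⟨huIt, le_refl u⟩
  have hvpval : vp k l1 (Jt ∪ D) a = u := by
    unfold vp
    rw [hC', hp'a, sortedNth_union_right hB1It2 (k + 1) (le_refl B1.card), Nat.sub_self]
    exact sortedNth_zero _ huIt2 (fun x hx => (Finset.mem_filter.mp hx).2)
  have hJtcu : Jt.card = a + u - l1 - 1 := hJtc
  have hIn : ∀ i < a, sortedNth It1 i 0 = sortedNth It i 0 := by
    intro i hi
    have hlt : i < (List.take a (It.sort (· ≤ ·))).length := by
      rw [List.length_take, sort_len]; omega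
    have hlt2 : i < (It.sort (· ≤ ·)).length := by rw [sort_len]; omega
    unfold sortedNth
    rw [← hIt1, sort_take, List.getD_eq_getElem _ _ hlt, List.getElem_take,
      List.getD_eq_getElem _ _ hlt2]
  constructor
  · refine ⟨?_, ?_, ?_, ?_, ?_, ?_⟩
    · rw [hI]; exact (Finset.filter_subset _ _).trans hItk
    · rw [hJ]
      apply Finset.union_subset hJtk
      intro x hx
      have h1 := Finset.mem_Icc.mp (Finset.mem_sdiff.mp hx).1
      rw [Finset.mem_Icc]; omega
    · rw [hI]; exact hIt1card
    · rw [hJ, hJcard]; omega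
    · rw [hJ, hp']; omega
    · intro i hi
      rw [hI, hJ]
      have hJn : sortedNth (Jt ∪ D) i 0 = sortedNth Jt i 0 :=
        sortedNth_union_left hJtD 0 (by omega)
      have hx : sortedNth It1 i 0 < u := by
        rw [hIn i hi, hu]
        exact sortedNth_lt_sortedNth 0 0 hi haIt
      constructor
      · rw [hJn, hIn i hi]
        exact hcond i hi
      · by_cases hcase : pOf l1 (Jt ∪ D) - (i + 1) < (Finset.Icc (l1 + 1) k \ (Jt ∪ D)).card
        · have h1 : vp k l1 (Jt ∪ D) a ≤ vp k l1 (Jt ∪ D) (i + 1) := by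
            unfold vp
            exact sortedNth_mono (k + 1) (by omega) hcase
          rw [hvpval] at h1
          omega
        · unfold vp
          rw [sortedNth_default _ (not_lt.mp hcase)]
          have h2 : sortedNth It i 0 ∈ It := sortedNth_mem 0 (by omega)
          have h3 := Finset.mem_Icc.mp (hItk h2)
          rw [hIn i hi]
          omega
  · constructor
    · rw [hI, hJ]
      unfold ItildeOf
      rw [hC', hp'a, sort_union hB1It2, List.drop_left' (by rw [sort_len]),
        Finset.sort_toFinset]
      have hneg : It2 = It.filter (fun x => ¬ x < u) := by
        rw [hIt2def]; ext x; simp [not_lt]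
      rw [hIt1def, hneg, Finset.filter_union_filter_not_eq]
    · rw [hJ]
      unfold JtildeOf
      rw [hvpval]
      ext x
      simp only [Finset.mem_inter, Finset.mem_union, Finset.mem_Icc, hD, Finset.mem_sdiff]
      constructor
      · rintro ⟨hx | hx, h1, h2⟩
        · exact hx
        · exact absurd hx.1.1 (by omega)
      · intro hx
        have h1 := hJtlt x hx
        have hb := Finset.mem_Icc.mp (hJtk hx)
        exact ⟨Or.inl hx, hb.1, by omega⟩

end Stmt11Aux
/-- for `l₁ + c < k`, the map `𝔟 : (I,J) ↦ (Ĩ, J̃)` is a bijection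
from the set of `l₁`-admissible pairs `(I,J)` with `|I| = a`, `|J| = a + c` onto the
set of pairs `(Ĩ, J̃)` satisfying the conditions `CondB`, with inverse `𝔠`. -/
theorem stmt11 (k l1 a c : ℕ) (hl1 : l1 ≤ k) (hlck : l1 + c < k) (hal1 : a ≤ l1) :
    (∀ I J : Finset ℕ, AdmPair k l1 a c I J →
        CondB k l1 a c (ItildeOf k l1 a I J) (JtildeOf k l1 a J) ∧
        ccMap k a (ItildeOf k l1 a I J) (JtildeOf k l1 a J) = (I, J)) ∧
    (∀ It Jt : Finset ℕ, CondB k l1 a c It Jt →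
        AdmPair k l1 a c (ccMap k a It Jt).1 (ccMap k a It Jt).2 ∧
        ItildeOf k l1 a (ccMap k a It Jt).1 (ccMap k a It Jt).2 = It ∧
        JtildeOf k l1 a (ccMap k a It Jt).2 = Jt) := by
  exact ⟨fun I J h => Stmt11Aux.forward k l1 a c hl1 hlck hal1 I J h,
    fun It Jt h => Stmt11Aux.backward k l1 a c hl1 hlck hal1 It Jt h⟩
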